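/- arXiv:2312.00011 — 2 statements merged into one kernel-verified Lean document; each statement's English description precedes it below -/
import Mathlib

section
/- For every real h, Φ(h) = 1/2 + sgn(h)·√S, where S = (1/(2π)) Σ_{k=0}^∞ ((2k)!!/(2k+1)!!) · P(k+1, h²)/2^k. -/
open Real MeasureTheory

/-- Lower regularized incomplete gamma function P(a,x) = γ(a,x)/Γ(a). -/
noncomputable def regGammaP (a x : ℝ) : ℝ :=
  (∫ t in (0:ℝ)..x, t ^ (a - 1) * Real.exp (-t)) / Real.Gamma a

/-- Standard normal cdf. -/
noncomputable def stdCdf (x : ℝ) : ℝ :=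
  ∫ t in Set.Iic x, Real.exp (-t ^ 2 / 2) / Real.sqrt (2 * Real.pi)

/-- (2k)!! = 2^k k! -/
noncomputable def evenDF (k : ℕ) : ℝ := 2 ^ k * k.factorial

/-- (2k+1)!! = (2k+1)!/(2^k k!) -/
noncomputable def oddDF (k : ℕ) : ℝ := (2 * k + 1).factorial / (2 ^ k * k.factorial)

/-! ### Auxiliary definitions and lemmas -/

noncomputable def aCoef (k : ℕ) : ℝ := 2 ^ k * k.factorial / (2 * k + 1).factorial

noncomputable def Ferf (s : ℝ) : ℝ := ∫ t in (0:ℝ)..s, Real.exp (-t^2/2)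

noncomputable def wInt (n : ℕ) : ℝ := ∫ u in (0:ℝ)..1, (1-u^2)^n

lemma hasSum_exp_real (x : ℝ) : HasSum (fun n : ℕ => x ^ n / n.factorial) (Real.exp x) := by
  rw [Real.exp_eq_exp_ℝ]
  exact NormedSpace.expSeries_div_hasSum_exp x

lemma hasSum_mul_exp (s y : ℝ) : HasSum (fun n : ℕ => s * y^n / n.factorial) (s * Real.exp y) := by
  simp only [mul_div_assoc]
  exact (hasSum_exp_real y).mul_left s

lemma aCoef_pos (k : ℕ) : 0 < aCoef k := by
  apply div_pos <;> positivity

lemma aCoef_le (k : ℕ) : aCoef k ≤ 2 ^ k / (k+1).factorial := by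
  unfold aCoef
  rw [div_le_div_iff₀ (by positivity) (by positivity)]
  have h : (k.factorial * (k+1).factorial : ℕ) ≤ (2*k+1).factorial := by
    apply Nat.le_of_dvd (Nat.factorial_pos _)
    have := Nat.factorial_mul_factorial_dvd_factorial_add k (k+1)
    simpa [two_mul, Nat.add_assoc] using this
  calc 2 ^ k * (k.factorial : ℝ) * (k+1).factorial
      = 2 ^ k * ((k.factorial * (k+1).factorial : ℕ) : ℝ) := by push_cast; ring
    _ ≤ 2 ^ k * ((2*k+1).factorial : ℕ) := by gcongr
    _ = 2 ^ k * (2*k+1).factorial := by norm_num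

lemma summable_aux (x : ℝ) : Summable (fun k : ℕ => aCoef k * x ^ (2*k+1)) := by
  apply Summable.of_norm
  have hs : Summable (fun k : ℕ => |x| * (2 * x^2) ^ k / k.factorial) := by
    simpa [mul_div_assoc] using (Real.summable_pow_div_factorial (2*x^2)).mul_left |x|
  apply hs.of_nonneg_of_le (fun k => norm_nonneg _)
  intro k
  rw [Real.norm_eq_abs, abs_mul, abs_of_pos (aCoef_pos k), abs_pow]
  calc aCoef k * |x| ^ (2*k+1)
      ≤ (2 ^ k / (k+1).factorial) * |x| ^ (2*k+1) := by
        gcongr; exact aCoef_le k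
    _ ≤ (2 ^ k / k.factorial) * |x| ^ (2*k+1) := by
        have : (k.factorial : ℝ) ≤ (k+1).factorial := by
          exact_mod_cast Nat.factorial_le (Nat.le_succ k)
        gcongr
    _ = |x| * (2 * x^2) ^ k / k.factorial := by
        rw [pow_succ, pow_mul, mul_pow, sq_abs]
        ring

lemma contw (n : ℕ) : Continuous (fun u : ℝ => (1-u^2)^n) := by fun_prop

lemma wallis_rec (n : ℕ) : wInt (n+1) = (2*n+2)/(2*n+3) * wInt n := by
  have hparts :
      ∫ u in (0:ℝ)..1, u * (u * (1-u^2)^n) = wInt (n+1) / (2*n+2) := by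
    have hv : ∀ u ∈ Set.uIcc (0:ℝ) 1,
        HasDerivAt (fun u : ℝ => -(1-u^2)^(n+1) / (2*n+2)) (u * (1-u^2)^n) u := by
      intro u _
      have h1 : HasDerivAt (fun u : ℝ => 1 - u^2) (-(2*u)) u := by
        simpa using ((hasDerivAt_pow 2 u).const_sub 1)
      have h3 := ((h1.pow (n+1)).div_const (2*n+2)).neg
      have e1 : (fun x : ℝ => -(1-x^2)^(n+1) / (2*(n:ℝ)+2))
          = (fun x : ℝ => -((1-x^2)^(n+1) / (2*(n:ℝ)+2))) := by
        funext x; ring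
      rw [e1]
      refine h3.congr_deriv ?_
      simp only [Nat.add_sub_cancel]
      push_cast
      have h22 : (2*(n:ℝ)+2) ≠ 0 := by positivity
      field_simp
    have hu : ∀ u ∈ Set.uIcc (0:ℝ) 1, HasDerivAt (fun u : ℝ => u) 1 u :=
      fun u _ => hasDerivAt_id u
    have key := intervalIntegral.integral_mul_deriv_eq_deriv_mul hu hv
      (intervalIntegrable_const)
      (((continuous_id.mul (contw n))).intervalIntegrable 0 1)
    rw [key]
    have h2 : ∫ u in (0:ℝ)..1, 1 * (-(1-u^2)^(n+1) / (2*n+2))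
        = -(wInt (n+1)) / (2*n+2) := by
      rw [show (fun u : ℝ => 1 * (-(1-u^2)^(n+1) / (2*n+2)))
          = (fun u : ℝ => (-(2*(n:ℝ)+2)⁻¹) * ((1-u^2)^(n+1))) from by
        ext u; ring, intervalIntegral.integral_const_mul, wInt]
      ring
    rw [h2]
    ring
  have hexpand : wInt (n+1) = wInt n - ∫ u in (0:ℝ)..1, u * (u * (1-u^2)^n) := by
    rw [wInt, wInt, ← intervalIntegral.integral_sub ((contw n).intervalIntegrable 0 1)
      (((show Continuous fun u : ℝ => u * (u * (1-u^2)^n) by fun_prop)).intervalIntegrable 0 1)]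
    apply intervalIntegral.integral_congr
    intro u _
    ring
  rw [hparts] at hexpand
  have h23 : (2*(n:ℝ)+3) ≠ 0 := by positivity
  have h22 : (2*(n:ℝ)+2) ≠ 0 := by positivity
  field_simp at hexpand ⊢
  linarith [hexpand]

lemma wallis (n : ℕ) : wInt n = 4^n * (n.factorial)^2 / (2*n+1).factorial := by
  induction n with
  | zero => simp [wInt]
  | succ n ih =>
    rw [wallis_rec n, ih]
    have h1 : ((2*(n+1)+1).factorial : ℝ) = (2*n+3)*((2*n+2)*(2*n+1).factorial) := by
      have e1 : 2*(n+1)+1 = (2*n+2)+1 := by ring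
      rw [e1, Nat.factorial_succ]
      have e2 : (2*n+2) = (2*n+1)+1 := by ring
      rw [e2, Nat.factorial_succ]
      push_cast; ring
    have h2 : (((n+1)).factorial : ℝ) = (n+1) * n.factorial := by
      rw [Nat.factorial_succ]; push_cast; ring
    rw [h1, h2]
    have h3 : ((2*n+1).factorial : ℝ) ≠ 0 := by positivity
    field_simp
    ring

lemma term_integral (k : ℕ) (s : ℝ) :
    aCoef k * s^(2*k+1) = ∫ u in (0:ℝ)..1, s * (s^2*(1-u^2)/2)^k / k.factorial := by
  have e : (fun u : ℝ => s * (s^2*(1-u^2)/2)^k / k.factorial)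
      = (fun u : ℝ => (s * (s^2/2)^k / k.factorial) * (1-u^2)^k) := by
    funext u
    rw [show s^2*(1-u^2)/2 = (s^2/2) * (1-u^2) from by ring, mul_pow]
    ring
  rw [e, intervalIntegral.integral_const_mul, ← wInt, wallis, aCoef]
  have hk : (k.factorial : ℝ) ≠ 0 := by positivity
  have h2 : ((2*k+1).factorial : ℝ) ≠ 0 := by positivity
  field_simp
  rw [show (4:ℝ) = 2*2 from by norm_num, mul_pow]
  rw [div_pow]
  field_simp
  ring

lemma series_eq (s : ℝ) (hs : 0 ≤ s) :
    ∑' k : ℕ, aCoef k * s^(2*k+1) = Real.exp (s^2/2) * Ferf s := by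
  have hsum : HasSum (fun k : ℕ => ∫ u in (0:ℝ)..1, s * (s^2*(1-u^2)/2)^k / k.factorial)
      (∫ u in (0:ℝ)..1, s * Real.exp (s^2*(1-u^2)/2)) := by
    refine intervalIntegral.hasSum_integral_of_dominated_convergence
      (bound := fun k u => s * (s^2/2)^k / k.factorial) ?_ ?_ ?_ ?_ ?_
    · intro k
      apply Continuous.aestronglyMeasurable
      fun_prop
    · intro k
      filter_upwards with u hu
      rw [Set.uIoc_of_le (by norm_num : (0:ℝ) ≤ 1)] at hu
      have h1 : 0 ≤ 1 - u^2 := by nlinarith [hu.1, hu.2]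
      have h2 : 1 - u^2 ≤ 1 := by nlinarith [hu.1]
      rw [Real.norm_eq_abs, abs_of_nonneg (by positivity)]
      have hb : (s^2*(1-u^2)/2)^k ≤ (s^2/2)^k := by
        apply pow_le_pow_left₀
        · have : 0 ≤ s^2*(1-u^2) := mul_nonneg (sq_nonneg s) h1
          linarith
        · nlinarith [sq_nonneg s]
      exact (div_le_div_iff_of_pos_right (by positivity)).mpr
        (mul_le_mul_of_nonneg_left hb hs)
    · filter_upwards with u _
      simp only [mul_div_assoc]
      exact ((Real.summable_pow_div_factorial (s^2/2)).mul_left s)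
    · exact intervalIntegrable_const
    · filter_upwards with u _
      exact hasSum_mul_exp s (s^2*(1-u^2)/2)
  have e1 : ∑' k : ℕ, aCoef k * s^(2*k+1)
      = ∫ u in (0:ℝ)..1, s * Real.exp (s^2*(1-u^2)/2) := by
    rw [← hsum.tsum_eq]
    exact tsum_congr fun k => term_integral k s
  rw [e1]
  have e2 : (fun u : ℝ => s * Real.exp (s^2*(1-u^2)/2))
      = (fun u : ℝ => Real.exp (s^2/2) * (s * Real.exp (-(s*u)^2/2))) := by
    funext u
    rw [show s^2*(1-u^2)/2 = s^2/2 + -(s*u)^2/2 from by ring, Real.exp_add]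
    ring
  rw [e2, intervalIntegral.integral_const_mul]
  congr 1
  have key := intervalIntegral.smul_integral_comp_mul_left (a := (0:ℝ)) (b := 1)
    (fun t => Real.exp (-t^2/2)) s
  simp only [smul_eq_mul, mul_one, mul_zero] at key
  rw [Ferf, ← key, ← intervalIntegral.integral_const_mul]

lemma ferf_hasDeriv (s : ℝ) : HasDerivAt Ferf (Real.exp (-s^2/2)) s := by
  have hg : Continuous fun t : ℝ => Real.exp (-t^2/2) := by fun_prop
  exact intervalIntegral.integral_hasDerivAt_right (hg.intervalIntegrable 0 s)
    hg.stronglyMeasurable.stronglyMeasurableAtFilter hg.continuousAt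

lemma ferf_cont : Continuous Ferf :=
  continuous_iff_continuousAt.mpr fun s => (ferf_hasDeriv s).continuousAt

lemma gamma_sub (k : ℕ) (h : ℝ) :
    ∫ t in (0:ℝ)..h^2, t^k * Real.exp (-t)
      = 2 * ∫ s in (0:ℝ)..|h|, s^(2*k+1) * Real.exp (-s^2) := by
  have key := intervalIntegral.integral_comp_smul_deriv (a := (0:ℝ)) (b := |h|)
    (f := fun x => x^2) (f' := fun x => 2*x) (g := fun t => t^k * Real.exp (-t))
    (fun x _ => by simpa using hasDerivAt_pow 2 x) (by fun_prop) (by fun_prop)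
  simp only [sq_abs] at key
  rw [show (0:ℝ)^2 = 0 from by norm_num] at key
  rw [← key, ← intervalIntegral.integral_const_mul]
  apply intervalIntegral.integral_congr
  intro s _
  simp only [smul_eq_mul, Function.comp]
  rw [← pow_mul, pow_add]
  ring

lemma main_sum (h : ℝ) :
    ∑' k : ℕ, aCoef k * ∫ t in (0:ℝ)..h^2, t^k * Real.exp (-t) = (Ferf |h|)^2 := by
  have habs : (0:ℝ) ≤ |h| := abs_nonneg h
  have hswap : HasSum
      (fun k : ℕ => ∫ s in (0:ℝ)..|h|, 2 * aCoef k * s^(2*k+1) * Real.exp (-s^2))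
      (∫ s in (0:ℝ)..|h|, 2 * Ferf s * Real.exp (-s^2/2)) := by
    refine intervalIntegral.hasSum_integral_of_dominated_convergence
      (bound := fun k s => 2 * aCoef k * |h|^(2*k+1)) ?_ ?_ ?_ ?_ ?_
    · intro k; exact (by fun_prop : Continuous fun s : ℝ =>
        2 * aCoef k * s^(2*k+1) * Real.exp (-s^2)).aestronglyMeasurable
    · intro k
      filter_upwards with s hs
      rw [Set.uIoc_of_le habs] at hs
      have hs1 : 0 < s := hs.1
      have hs2 : s ≤ |h| := hs.2
      have hak : (0:ℝ) ≤ aCoef k := (aCoef_pos k).le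
      have hp1 : (0:ℝ) ≤ s^(2*k+1) := by positivity
      have hp2 : (0:ℝ) ≤ Real.exp (-s^2) := (Real.exp_pos _).le
      have hnn : (0:ℝ) ≤ 2 * aCoef k * s^(2*k+1) * Real.exp (-s^2) :=
        mul_nonneg (mul_nonneg (mul_nonneg (by norm_num) hak) hp1) hp2
      rw [Real.norm_eq_abs, abs_of_nonneg hnn]
      calc 2 * aCoef k * s^(2*k+1) * Real.exp (-s^2)
          ≤ 2 * aCoef k * |h|^(2*k+1) * 1 := by
            gcongr
            all_goals
              first
                | exact hak
                | exact hs1.le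
                | exact hs2
                | exact hp1
                | exact hp2
                | exact Real.exp_le_one_iff.mpr (by nlinarith)
        _ = 2 * aCoef k * |h|^(2*k+1) := by rw [mul_one]
    · filter_upwards with s _
      have := (summable_aux |h|).mul_left 2
      simpa [mul_assoc] using this
    · exact intervalIntegrable_const
    · filter_upwards with s hs
      rw [Set.uIoc_of_le habs] at hs
      have hs0 : (0:ℝ) ≤ s := hs.1.le
      have h1 := ((summable_aux s).hasSum).mul_left (2*Real.exp (-s^2))
      have e : (fun k : ℕ => (2*Real.exp (-s^2)) * (aCoef k * s^(2*k+1)))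
          = fun k : ℕ => 2 * aCoef k * s^(2*k+1) * Real.exp (-s^2) := by
        funext k; ring
      rw [e] at h1
      refine (congrArg (HasSum _) ?_).mpr h1
      rw [series_eq s hs0]
      rw [show -s^2/2 = -s^2 + s^2/2 from by ring, Real.exp_add]
      ring
  have e1 : ∑' k : ℕ, aCoef k * ∫ t in (0:ℝ)..h^2, t^k * Real.exp (-t)
      = ∫ s in (0:ℝ)..|h|, 2 * Ferf s * Real.exp (-s^2/2) := by
    rw [← hswap.tsum_eq]
    apply tsum_congr
    intro k
    rw [gamma_sub k h, ← mul_assoc, ← intervalIntegral.integral_const_mul]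
    apply intervalIntegral.integral_congr
    intro s _
    ring
  rw [e1]
  have hderiv : ∀ s ∈ Set.uIcc (0:ℝ) |h|,
      HasDerivAt (fun s => (Ferf s)^2) (2 * Ferf s * Real.exp (-s^2/2)) s := by
    intro s _
    have := (ferf_hasDeriv s).pow 2
    exact this.congr_deriv (by simp)
  have hint : IntervalIntegrable (fun s => 2 * Ferf s * Real.exp (-s^2/2)) volume 0 |h| :=
    (((continuous_const.mul ferf_cont)).mul
      (by fun_prop : Continuous fun s : ℝ => Real.exp (-s^2/2))).intervalIntegrable 0 |h|
  rw [intervalIntegral.integral_eq_sub_of_hasDerivAt hderiv hint]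
  simp [Ferf]

lemma gauss_integrable : Integrable (fun t : ℝ => Real.exp (-t^2/2)) := by
  have := integrable_exp_neg_mul_sq (b := (1/2:ℝ)) (by norm_num)
  convert this using 2 with t
  ring_nf

lemma gauss_total : ∫ t : ℝ, Real.exp (-t^2/2) = Real.sqrt (2*π) := by
  have := integral_gaussian (1/2)
  rw [show π / (1/2 : ℝ) = 2*π from by ring] at this
  rw [← this]
  congr 1 with t
  ring_nf

lemma gauss_symm : ∫ t in Set.Iic (0:ℝ), Real.exp (-t^2/2)
    = ∫ t in Set.Ioi (0:ℝ), Real.exp (-t^2/2) := by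
  have := integral_comp_neg_Ioi (0:ℝ) (fun t => Real.exp (-t^2/2))
  simp only [neg_zero] at this
  rw [← this]
  congr 1 with t
  rw [neg_pow, pow_two, pow_two]
  ring_nf

lemma gauss_half : ∫ t in Set.Iic (0:ℝ), Real.exp (-t^2/2) = Real.sqrt (2*π) / 2 := by
  have hadd := MeasureTheory.integral_add_compl
    (measurableSet_Iic : MeasurableSet (Set.Iic (0:ℝ))) gauss_integrable
  rw [Set.compl_Iic] at hadd
  rw [gauss_total] at hadd
  rw [← gauss_symm] at hadd
  linarith

lemma stdCdf_eq (h : ℝ) : stdCdf h = 1/2 + Ferf h / Real.sqrt (2*π) := by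
  have hc : (0:ℝ) < Real.sqrt (2*π) := Real.sqrt_pos.mpr (by positivity)
  have hint : ∀ x : ℝ, IntegrableOn (fun t : ℝ => Real.exp (-t^2/2)) (Set.Iic x) :=
    fun x => gauss_integrable.integrableOn
  have key : stdCdf h - stdCdf 0 = Ferf h / Real.sqrt (2*π) := by
    unfold stdCdf Ferf
    rw [MeasureTheory.integral_div, MeasureTheory.integral_div, div_sub_div_same]
    congr 1
    exact intervalIntegral.integral_Iic_sub_Iic (hint 0) (hint h)
  have h0 : stdCdf 0 = 1/2 := by
    unfold stdCdf
    rw [MeasureTheory.integral_div, gauss_half]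
    rw [div_div, div_eq_div_iff (by positivity) (by norm_num)]
    ring
  linarith [key, h0]

lemma ferf_neg (h : ℝ) : Ferf (-h) = - Ferf h := by
  have := intervalIntegral.integral_comp_neg (a := (0:ℝ)) (b := -h)
    (f := fun t => Real.exp (-t^2/2))
  simp only [neg_neg, neg_zero] at this
  unfold Ferf
  rw [show (fun t : ℝ => Real.exp (-(-t)^2/2)) = fun t : ℝ => Real.exp (-t^2/2) from by
    funext t; rw [neg_pow, pow_two, pow_two]; ring_nf] at this
  rw [this, intervalIntegral.integral_symm]

lemma ferf_nonneg {s : ℝ} (hs : 0 ≤ s) : 0 ≤ Ferf s :=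
  intervalIntegral.integral_nonneg hs (fun u _ => (Real.exp_pos _).le)

theorem stdCdf_series (h : ℝ) :
    stdCdf h = 1 / 2 + (if 0 ≤ h then (1:ℝ) else -1) *
      Real.sqrt ((1 / (2 * Real.pi)) *
        ∑' k : ℕ, (evenDF k / oddDF k) * regGammaP (k + 1) (h ^ 2) / 2 ^ k) := by
  have hterm : ∀ k : ℕ, evenDF k / oddDF k * regGammaP (k + 1) (h ^ 2) / 2 ^ k
      = aCoef k * ∫ t in (0:ℝ)..h^2, t^k * Real.exp (-t) := by
    intro k
    have hfac : (k.factorial : ℝ) ≠ 0 := by positivity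
    have hfac2 : ((2*k+1).factorial : ℝ) ≠ 0 := by positivity
    have hg : Real.Gamma ((k:ℝ) + 1) = k.factorial := Real.Gamma_nat_eq_factorial k
    have hi : (∫ t in (0:ℝ)..h^2, t ^ ((k:ℝ) + 1 - 1) * Real.exp (-t))
        = ∫ t in (0:ℝ)..h^2, t^k * Real.exp (-t) := by
      apply intervalIntegral.integral_congr
      intro t _
      simp only [show (k:ℝ)+1-1 = ((k:ℕ):ℝ) from by ring, Real.rpow_natCast]
    rw [regGammaP, hi, hg, evenDF, oddDF, aCoef]
    field_simp
  rw [tsum_congr hterm, main_sum h]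
  have hs : Real.sqrt (1/(2*π) * Ferf |h|^2) = Ferf |h| / Real.sqrt (2*π) := by
    rw [show 1/(2*π) * Ferf |h|^2 = (Ferf |h| / Real.sqrt (2*π))^2 from by
      rw [div_pow, Real.sq_sqrt (by positivity)]; ring]
    exact Real.sqrt_sq (div_nonneg (ferf_nonneg (abs_nonneg h)) (Real.sqrt_nonneg _))
  rw [hs, stdCdf_eq h]
  by_cases hh : 0 ≤ h
  · rw [if_pos hh, one_mul, abs_of_nonneg hh]
  · rw [if_neg hh, abs_of_neg (lt_of_not_ge hh)]
    rw [show Ferf (-h) = -Ferf h from ferf_neg h]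
    ring
end

section
/- For x, y real and ρ ∈ (−1, 1) with ρ ≠ 0, the bivariate normal cdf satisfies Φ²_ρ(x,y) = ((1 − sgn(ρ))/2)·Φ(x) + sgn(ρ)·(Φ²_ρ̃(z, ỹ) + Φ²_ρ̃(−z, x)), where ρ̃ = −√((1−|ρ|)/2), ỹ = y·sgn(ρ), and z = (x − ỹ)/√(2(1−|ρ|)). -/
open Real MeasureTheory

/-- Bivariate standard normal cdf with correlation ρ. -/
noncomputable def biCdf (ρ x y : ℝ) : ℝ :=
  (1 / (2 * Real.pi * Real.sqrt (1 - ρ ^ 2))) *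
    ∫ s in Set.Iic x, ∫ t in Set.Iic y,
      Real.exp (-(s ^ 2 - 2 * ρ * s * t + t ^ 2) / (2 * (1 - ρ ^ 2)))

noncomputable def g2 (p : ℝ × ℝ) : ℝ := Real.exp (-(p.1^2 + p.2^2)/2)

lemma g2_eq (p : ℝ × ℝ) : g2 p = Real.exp (-(1/2 : ℝ) * p.1^2) * Real.exp (-(1/2 : ℝ) * p.2^2) := by
  rw [g2, ← Real.exp_add]; ring_nf

lemma g2_integrable : Integrable g2 (volume : Measure (ℝ × ℝ)) := by
  have h : Integrable (fun t : ℝ => Real.exp (-(1/2 : ℝ) * t^2)) := integrable_exp_neg_mul_sq (by norm_num)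
  have := h.mul_prod h
  rw [← Measure.volume_eq_prod] at this
  exact this.congr (Filter.Eventually.of_forall fun p => (g2_eq p).symm)

lemma g2_nonneg (p : ℝ × ℝ) : 0 ≤ g2 p := Real.exp_nonneg _

/-- affine substitution in an `Iic` integral. -/
lemma integral_Iic_affine {σ c : ℝ} (hσ : 0 < σ) (y : ℝ) (f : ℝ → ℝ) :
    ∫ t in Set.Iic y, f t = σ * ∫ u in Set.Iic ((y - c)/σ), f (σ * u + c) := by
  have hemb : MeasurableEmbedding (fun u : ℝ => σ * u + c) :=
    (Homeomorph.measurableEmbedding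
      ((Homeomorph.mulLeft₀ σ hσ.ne').trans (Homeomorph.addRight c)))
  have hmap : Measure.map (fun u : ℝ => σ * u + c) volume
      = ENNReal.ofReal σ⁻¹ • (volume : Measure ℝ) := by
    have h1 : (fun u : ℝ => σ * u + c) = (fun u : ℝ => u + c) ∘ (fun u : ℝ => σ * u) := rfl
    rw [h1, ← Measure.map_map (by fun_prop) (by fun_prop),
      Real.map_volume_mul_left hσ.ne', Measure.map_smul, map_add_right_eq_self,
      abs_of_pos (by positivity)]
  have hpre : (fun u : ℝ => σ * u + c) ⁻¹' (Set.Iic y) = Set.Iic ((y - c)/σ) := by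
    ext u; simp only [Set.mem_preimage, Set.mem_Iic, le_div_iff₀ hσ]
    constructor <;> intro h <;> nlinarith
  have := hemb.setIntegral_map f (Set.Iic y) (μ := volume)
  rw [hmap] at this
  rw [hpre] at this
  rw [Measure.restrict_smul, integral_smul_measure] at this
  rw [← this]
  simp only [ENNReal.toReal_ofReal (by positivity : (0:ℝ) ≤ σ⁻¹), smul_eq_mul]
  rw [← mul_assoc, mul_inv_cancel₀ hσ.ne', one_mul]

/-- set-integral form of iterated halfplane integral -/
lemma iterated_eq_set (x : ℝ) (h : ℝ → ℝ) (hh : Measurable h) :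
    ∫ s in Set.Iic x, ∫ u in Set.Iic (h s), g2 (s, u)
      = ∫ p in {p : ℝ × ℝ | p.1 ≤ x ∧ p.2 ≤ h p.1}, g2 p := by
  set A : Set (ℝ × ℝ) := {p : ℝ × ℝ | p.1 ≤ x ∧ p.2 ≤ h p.1} with hA
  have hAm : MeasurableSet A := by
    apply MeasurableSet.inter
    · exact measurable_fst measurableSet_Iic
    · exact measurableSet_le measurable_snd (hh.comp measurable_fst)
  have hint : Integrable (A.indicator g2) (volume : Measure (ℝ × ℝ)) :=
    (g2_integrable.integrableOn).integrable_indicator hAm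
  rw [← integral_indicator hAm]
  rw [Measure.volume_eq_prod] at hint ⊢
  rw [integral_prod _ hint]
  rw [← integral_indicator (measurableSet_Iic : MeasurableSet (Set.Iic x))]
  congr 1
  ext s
  by_cases hs : s ≤ x
  · rw [Set.indicator_of_mem (by exact hs : s ∈ Set.Iic x)]
    have : ∀ t : ℝ, A.indicator g2 (s, t) = (Set.Iic (h s)).indicator (fun t => g2 (s, t)) t := by
      intro t
      by_cases ht : t ≤ h s
      · rw [Set.indicator_of_mem (by exact ⟨hs, ht⟩), Set.indicator_of_mem (by exact ht)]
      · rw [Set.indicator_of_notMem (by simp [hA, ht]), Set.indicator_of_notMem (by exact ht)]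
    simp_rw [this]
    rw [integral_indicator measurableSet_Iic]
  · rw [Set.indicator_of_notMem (by exact hs : s ∉ Set.Iic x)]
    have : ∀ t : ℝ, A.indicator g2 (s, t) = 0 := by
      intro t; apply Set.indicator_of_notMem; simp [hA, hs]
    simp [this]

lemma biCdf_eq {ρ : ℝ} (h : ρ^2 < 1) (x y : ℝ) :
    biCdf ρ x y = (1/(2*π)) *
      ∫ p in {p : ℝ × ℝ | p.1 ≤ x ∧ ρ * p.1 + Real.sqrt (1 - ρ^2) * p.2 ≤ y}, g2 p := by
  have h1 : (0:ℝ) < 1 - ρ^2 := by linarith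
  set σ := Real.sqrt (1 - ρ^2) with hσdef
  have hσ : 0 < σ := Real.sqrt_pos.2 h1
  have hσ2 : σ^2 = 1 - ρ^2 := Real.sq_sqrt h1.le
  -- rewrite set
  have hset : {p : ℝ × ℝ | p.1 ≤ x ∧ ρ * p.1 + σ * p.2 ≤ y}
      = {p : ℝ × ℝ | p.1 ≤ x ∧ p.2 ≤ (y - ρ * p.1)/σ} := by
    ext p; simp only [Set.mem_setOf_eq, le_div_iff₀ hσ]
    constructor <;> intro ⟨h1', h2'⟩ <;> exact ⟨h1', by nlinarith⟩
  rw [hset, ← iterated_eq_set x (fun s => (y - ρ * s)/σ) (by fun_prop)]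
  rw [biCdf]
  have inner : ∀ s : ℝ, (∫ t in Set.Iic y,
      Real.exp (-(s ^ 2 - 2 * ρ * s * t + t ^ 2) / (2 * (1 - ρ ^ 2))))
      = σ * ∫ u in Set.Iic ((y - ρ * s)/σ), g2 (s, u) := by
    intro s
    rw [integral_Iic_affine hσ y (c := ρ * s)]
    congr 1
    apply setIntegral_congr_fun measurableSet_Iic
    intro u _
    show Real.exp (-(s ^ 2 - 2 * ρ * s * (σ * u + ρ * s) + (σ * u + ρ * s) ^ 2) / (2 * (1 - ρ ^ 2)))
      = Real.exp (-(s^2 + u^2)/2)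
    congr 1
    have : s ^ 2 - 2 * ρ * s * (σ * u + ρ * s) + (σ * u + ρ * s) ^ 2
        = (1 - ρ^2) * (s^2 + u^2) := by nlinarith [hσ2]
    rw [this]
    field_simp
  simp_rw [inner]
  rw [integral_const_mul]
  rw [← mul_assoc]
  congr 1
  field_simp
  ring

def lm (a b c d : ℝ) : (ℝ × ℝ) →ₗ[ℝ] (ℝ × ℝ) where
  toFun p := (a * p.1 + b * p.2, c * p.1 + d * p.2)
  map_add' p q := by
    simp only [Prod.fst_add, Prod.snd_add, Prod.mk_add_mk, Prod.mk.injEq]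
    constructor <;> ring
  map_smul' r p := by
    simp only [Prod.smul_fst, Prod.smul_snd, RingHom.id_apply, Prod.smul_mk, smul_eq_mul,
      Prod.mk.injEq]
    constructor <;> ring

lemma lm_apply (a b c d : ℝ) (p : ℝ × ℝ) :
    lm a b c d p = (a * p.1 + b * p.2, c * p.1 + d * p.2) := rfl

lemma lm_det (a b c d : ℝ) : LinearMap.det (lm a b c d) = a * d - b * c := by
  rw [← LinearMap.det_toMatrix (Module.Basis.finTwoProd ℝ)]
  have : LinearMap.toMatrix (Module.Basis.finTwoProd ℝ) (Module.Basis.finTwoProd ℝ) (lm a b c d)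
      = !![a, b; c, d] := by
    ext i j
    fin_cases i <;> fin_cases j <;>
      simp [LinearMap.toMatrix_apply, Module.Basis.finTwoProd_zero, Module.Basis.finTwoProd_one,
        Module.Basis.coe_finTwoProd_repr, lm_apply]
  rw [this, Matrix.det_fin_two_of]

lemma setIntegral_g2_preimage {a b c d : ℝ} (h1 : a^2 + c^2 = 1) (h2 : b^2 + d^2 = 1)
    (h3 : a * b + c * d = 0) (S : Set (ℝ × ℝ)) :
    ∫ p in (lm a b c d) ⁻¹' S, g2 p = ∫ p in S, g2 p := by
  have hdet2 : (LinearMap.det (lm a b c d))^2 = 1 := by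
    rw [lm_det]; nlinarith [h1, h2, h3]
  have hdet : LinearMap.det (lm a b c d) ≠ 0 := by
    intro h; rw [h] at hdet2; norm_num at hdet2
  have habs : |(LinearMap.det (lm a b c d))⁻¹| = 1 := by
    rw [abs_inv]; rw [show |LinearMap.det (lm a b c d)| = 1 from ?_]; norm_num
    nlinarith [abs_nonneg (LinearMap.det (lm a b c d)), sq_abs (LinearMap.det (lm a b c d))]
  have hmap : Measure.map (lm a b c d) volume = (volume : Measure (ℝ × ℝ)) := by
    rw [Measure.map_linearMap_addHaar_eq_smul_addHaar volume hdet, habs]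
    simp
  have hemb : MeasurableEmbedding (lm a b c d) := by
    have := ((LinearMap.equivOfDetNeZero (lm a b c d) hdet).toContinuousLinearEquiv).toHomeomorph.measurableEmbedding
    exact this
  have hg : ∀ p : ℝ × ℝ, g2 (lm a b c d p) = g2 p := by
    intro p
    rw [lm_apply]
    show Real.exp (-((a * p.1 + b * p.2)^2 + (c * p.1 + d * p.2)^2)/2) = _
    have : (a * p.1 + b * p.2)^2 + (c * p.1 + d * p.2)^2 = p.1^2 + p.2^2 := by
      linear_combination p.1^2 * h1 + p.2^2 * h2 + 2 * p.1 * p.2 * h3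
    rw [this]; rfl
  have key := hemb.setIntegral_map g2 S (μ := volume)
  rw [hmap] at key
  rw [key]
  simp only [hg]

lemma line_null (a b k : ℝ) (hb : b ≠ 0) :
    (volume : Measure (ℝ × ℝ)) {p : ℝ × ℝ | a * p.1 + b * p.2 = k} = 0 := by
  have hset : {p : ℝ × ℝ | a * p.1 + b * p.2 = k}
      = {p : ℝ × ℝ | p.2 = (k - a * p.1)/b} := by
    ext p; simp only [Set.mem_setOf_eq, eq_div_iff hb]
    constructor <;> intro h <;> linarith
  rw [hset]
  have hm : MeasurableSet {p : ℝ × ℝ | p.2 = (k - a * p.1)/b} :=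
    measurableSet_eq_fun measurable_snd (by fun_prop)
  rw [Measure.volume_eq_prod, Measure.prod_apply hm]
  have : ∀ s : ℝ, (volume : Measure ℝ) (Prod.mk s ⁻¹' {p : ℝ × ℝ | p.2 = (k - a * p.1)/b}) = 0 := by
    intro s
    have : Prod.mk s ⁻¹' {p : ℝ × ℝ | p.2 = (k - a * p.1)/b} = {(k - a * s)/b} := by
      ext t; simp [Set.mem_preimage]
    rw [this, Real.volume_singleton]
  simp_rw [this]
  simp

lemma strip_eq (x : ℝ) :
    ∫ p in {p : ℝ × ℝ | p.1 ≤ x}, g2 p = Real.sqrt (2*π) * ∫ s in Set.Iic x, Real.exp (-(1/2:ℝ) * s^2) := by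
  have hAm : MeasurableSet {p : ℝ × ℝ | p.1 ≤ x} := measurable_fst measurableSet_Iic
  have hint : Integrable ({p : ℝ × ℝ | p.1 ≤ x}.indicator g2) (volume : Measure (ℝ × ℝ)) :=
    (g2_integrable.integrableOn).integrable_indicator hAm
  rw [← integral_indicator hAm]
  rw [Measure.volume_eq_prod] at hint ⊢
  rw [integral_prod _ hint]
  have inner : ∀ s : ℝ, (∫ t : ℝ, {p : ℝ × ℝ | p.1 ≤ x}.indicator g2 (s, t))
      = (Set.Iic x).indicator (fun s => Real.sqrt (2*π) * Real.exp (-(1/2:ℝ) * s^2)) s := by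
    intro s
    by_cases hs : s ≤ x
    · rw [Set.indicator_of_mem (by exact hs)]
      have : ∀ t : ℝ, {p : ℝ × ℝ | p.1 ≤ x}.indicator g2 (s, t)
          = Real.exp (-(1/2:ℝ) * s^2) * Real.exp (-(1/2:ℝ) * t^2) := by
        intro t
        rw [Set.indicator_of_mem (by exact hs), g2, ← Real.exp_add]
        ring_nf
      simp_rw [this]
      rw [integral_const_mul, integral_gaussian]
      rw [show π / (1/2:ℝ) = 2*π by ring]
      ring
    · rw [Set.indicator_of_notMem (by exact hs)]
      have : ∀ t : ℝ, {p : ℝ × ℝ | p.1 ≤ x}.indicator g2 (s, t) = 0 := by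
        intro t; exact Set.indicator_of_notMem (by exact hs) _
      simp [this]
  simp_rw [inner]
  rw [integral_indicator measurableSet_Iic, integral_const_mul]

lemma stdCdf_eq_s19 (x : ℝ) :
    stdCdf x = (1/(2*π)) * ∫ p in {p : ℝ × ℝ | p.1 ≤ x}, g2 p := by
  rw [strip_eq, stdCdf]
  have h2π : (0:ℝ) < 2*π := by positivity
  have : ∀ t : ℝ, Real.exp (-t^2/2) / Real.sqrt (2*π)
      = (Real.sqrt (2*π))⁻¹ * Real.exp (-(1/2:ℝ) * t^2) := by
    intro t; rw [div_eq_inv_mul]; ring_nf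
  simp_rw [this]
  rw [integral_const_mul, ← mul_assoc]
  congr 1
  rw [show (1:ℝ)/(2*π) * Real.sqrt (2*π) = Real.sqrt (2*π) / (2*π) by ring]
  rw [Real.sqrt_div_self', one_div]

lemma key {ρ : ℝ} (h0 : 0 < ρ) (h1 : ρ < 1) (x y : ℝ) :
    biCdf ρ x y = biCdf (-Real.sqrt ((1-ρ)/2)) ((x - y)/Real.sqrt (2*(1-ρ))) y
      + biCdf (-Real.sqrt ((1-ρ)/2)) (-((x - y)/Real.sqrt (2*(1-ρ)))) x := by
  set c := Real.sqrt (2*(1-ρ)) with hcdef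
  set σ := Real.sqrt (1-ρ^2) with hσdef
  set rt := -Real.sqrt ((1-ρ)/2) with hrtdef
  have h1ρ : (0:ℝ) < 1 - ρ := by linarith
  have hc : 0 < c := Real.sqrt_pos.2 (by linarith)
  have hc2 : c^2 = 2*(1-ρ) := Real.sq_sqrt (by linarith)
  have hρ2 : ρ^2 < 1 := by nlinarith
  have hσ : 0 < σ := Real.sqrt_pos.2 (by nlinarith)
  have hσ2 : σ^2 = 1-ρ^2 := Real.sq_sqrt (by nlinarith)
  have hrt2 : rt^2 = (1-ρ)/2 := by
    rw [hrtdef, neg_sq]; exact Real.sq_sqrt (by linarith)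
  have hrtlt : rt^2 < 1 := by rw [hrt2]; linarith
  have hsc : Real.sqrt ((1-ρ)/2) * c = 1 - ρ := by
    rw [hcdef, ← Real.sqrt_mul (by linarith)]
    rw [show (1-ρ)/2 * (2*(1-ρ)) = (1-ρ)^2 by ring]
    exact Real.sqrt_sq (by linarith)
  have hrteq : rt = (ρ - 1)/c := by
    rw [eq_div_iff hc.ne', hrtdef, neg_mul]
    linarith
  have hσteq : Real.sqrt (1 - rt^2) = σ/c := by
    rw [hrt2, hσdef, hcdef, ← Real.sqrt_div (by nlinarith : (0:ℝ) ≤ 1-ρ^2)]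
    congr 1
    field_simp
    ring
  have hn : (1-ρ)^2 + σ^2 = c^2 := by rw [hσ2, hc2]; ring
  -- rewrite all three biCdf
  rw [biCdf_eq hρ2, biCdf_eq hrtlt, biCdf_eq hrtlt, ← hσdef, hσteq]
  -- pointwise computations for the two linear maps
  have key1 : ∀ p : ℝ × ℝ,
      (1-ρ) * ((1-ρ)/c * p.1 + σ/c * p.2) - σ * (-(σ/c) * p.1 + (1-ρ)/c * p.2) = c * p.1 := by
    intro p; field_simp; linear_combination p.1 * hn
  have key2 : ∀ p : ℝ × ℝ,
      ρ * ((1-ρ)/c * p.1 + σ/c * p.2) + σ * (-(σ/c) * p.1 + (1-ρ)/c * p.2)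
        = rt * p.1 + σ/c * p.2 := by
    intro p; rw [hrteq]; field_simp; linear_combination (-p.1) * hσ2
  have key3 : ∀ p : ℝ × ℝ,
      (1-ρ) * (-((1-ρ)/c) * p.1 + σ/c * p.2) - σ * (σ/c * p.1 + (1-ρ)/c * p.2)
        = -(c * p.1) := by
    intro p; field_simp; linear_combination (-p.1) * hn
  have key4 : ∀ p : ℝ × ℝ,
      -((1-ρ)/c) * p.1 + σ/c * p.2 = rt * p.1 + σ/c * p.2 := by
    intro p; rw [hrteq]; ring
  -- set identifications
  have claim1 : {p : ℝ × ℝ | p.1 ≤ (x-y)/c ∧ rt * p.1 + σ/c * p.2 ≤ y}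
      = (lm ((1-ρ)/c) (σ/c) (-(σ/c)) ((1-ρ)/c)) ⁻¹'
        {p : ℝ × ℝ | (1-ρ)*p.1 - σ*p.2 ≤ x - y ∧ ρ*p.1 + σ*p.2 ≤ y} := by
    ext p
    simp only [Set.mem_setOf_eq, Set.mem_preimage, lm_apply]
    rw [key1 p, key2 p]
    constructor
    · rintro ⟨u, v⟩
      refine ⟨?_, v⟩
      rw [le_div_iff₀ hc] at u; linarith
    · rintro ⟨u, v⟩
      refine ⟨?_, v⟩
      rw [le_div_iff₀ hc]; linarith
  have claim2 : {p : ℝ × ℝ | p.1 ≤ -((x-y)/c) ∧ rt * p.1 + σ/c * p.2 ≤ x}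
      = (lm (-((1-ρ)/c)) (σ/c) (σ/c) ((1-ρ)/c)) ⁻¹'
        {p : ℝ × ℝ | x - y ≤ (1-ρ)*p.1 - σ*p.2 ∧ p.1 ≤ x} := by
    ext p
    simp only [Set.mem_setOf_eq, Set.mem_preimage, lm_apply]
    rw [key3 p, key4 p]
    constructor
    · rintro ⟨u, v⟩
      refine ⟨?_, v⟩
      rw [show -((x-y)/c) = (-(x-y))/c by ring, le_div_iff₀ hc] at u
      linarith
    · rintro ⟨u, v⟩
      refine ⟨?_, v⟩
      rw [show -((x-y)/c) = (-(x-y))/c by ring, le_div_iff₀ hc]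
      linarith
  -- orthonormality
  have horth1a : ((1-ρ)/c)^2 + (-(σ/c))^2 = 1 := by field_simp; linear_combination hn
  have horth1b : (σ/c)^2 + ((1-ρ)/c)^2 = 1 := by field_simp; linear_combination hn
  have horth1c : ((1-ρ)/c) * (σ/c) + (-(σ/c)) * ((1-ρ)/c) = 0 := by ring
  have horth2a : (-((1-ρ)/c))^2 + (σ/c)^2 = 1 := by field_simp; linear_combination hn
  have horth2b : (σ/c)^2 + ((1-ρ)/c)^2 = 1 := horth1b
  have horth2c : (-((1-ρ)/c)) * (σ/c) + (σ/c) * ((1-ρ)/c) = 0 := by ring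
  rw [claim1, claim2, setIntegral_g2_preimage horth1a horth1b horth1c,
    setIntegral_g2_preimage horth2a horth2b horth2c]
  -- now pure set/measure argument
  set B := {p : ℝ × ℝ | (1-ρ)*p.1 - σ*p.2 ≤ x - y ∧ ρ*p.1 + σ*p.2 ≤ y} with hB
  set C := {p : ℝ × ℝ | x - y ≤ (1-ρ)*p.1 - σ*p.2 ∧ p.1 ≤ x} with hC
  set C' := {p : ℝ × ℝ | x - y < (1-ρ)*p.1 - σ*p.2 ∧ p.1 ≤ x} with hC'
  have hBm : MeasurableSet B := by
    rw [hB, Set.setOf_and]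
    exact (measurableSet_le (by fun_prop) (by fun_prop)).inter
      (measurableSet_le (by fun_prop) (by fun_prop))
  have hC'm : MeasurableSet C' := by
    rw [hC', Set.setOf_and]
    exact (measurableSet_lt (by fun_prop) (by fun_prop)).inter
      (measurableSet_le (by fun_prop) (by fun_prop))
  have hunion : {p : ℝ × ℝ | p.1 ≤ x ∧ ρ*p.1 + σ*p.2 ≤ y} = B ∪ C' := by
    ext p
    simp only [Set.mem_setOf_eq, Set.mem_union, hB, hC']
    constructor
    · rintro ⟨u, v⟩
      rcases le_or_gt ((1-ρ)*p.1 - σ*p.2) (x - y) with h | h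
      · exact Or.inl ⟨h, v⟩
      · exact Or.inr ⟨h, u⟩
    · rintro (⟨u, v⟩ | ⟨u, v⟩)
      · exact ⟨by linarith, v⟩
      · exact ⟨v, by linarith⟩
  have hdisj : Disjoint B C' := by
    rw [Set.disjoint_left]
    rintro p ⟨u, _⟩ ⟨v, _⟩
    exact absurd u (not_le.2 v)
  have hCC' : ∫ p in C', g2 p = ∫ p in C, g2 p := by
    apply setIntegral_congr_set
    rw [ae_eq_set]
    constructor
    · rw [show C' \ C = ∅ from ?_]
      · exact measure_empty
      · rw [Set.diff_eq_empty]
        rintro p ⟨u, v⟩; exact ⟨u.le, v⟩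
    · refine measure_mono_null ?_ (line_null (1-ρ) (-σ) (x-y) (neg_ne_zero.2 hσ.ne'))
      rintro p ⟨hpC, hn'⟩
      simp only [hC, Set.mem_setOf_eq] at hpC
      obtain ⟨u, v⟩ := hpC
      have hE : ¬ (x - y < (1-ρ)*p.1 - σ*p.2) := fun h => hn' ⟨h, v⟩
      simp only [Set.mem_setOf_eq]
      have := not_lt.1 hE
      linarith
  rw [hunion, setIntegral_union hdisj hC'm (g2_integrable.integrableOn) (g2_integrable.integrableOn),
    hCC', mul_add]

lemma reflect {ρ : ℝ} (h : ρ^2 < 1) (x y : ℝ) :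
    biCdf ρ x y + biCdf (-ρ) x (-y) = stdCdf x := by
  set σ := Real.sqrt (1 - ρ^2) with hσdef
  have h1 : (0:ℝ) < 1 - ρ^2 := by linarith
  have hσ : 0 < σ := Real.sqrt_pos.2 h1
  have hσ2 : σ^2 = 1 - ρ^2 := Real.sq_sqrt h1.le
  have hneg : (-ρ)^2 < 1 := by rw [neg_sq]; exact h
  rw [biCdf_eq h, biCdf_eq hneg, stdCdf_eq_s19]
  rw [show Real.sqrt (1 - (-ρ)^2) = σ by rw [neg_sq, hσdef]]
  rw [← hσdef]
  -- reflection map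
  have horth1 : (1:ℝ)^2 + (0:ℝ)^2 = 1 := by norm_num
  have horth2 : (0:ℝ)^2 + (-1:ℝ)^2 = 1 := by norm_num
  have horth3 : (1:ℝ) * 0 + (0:ℝ) * (-1) = 0 := by norm_num
  have claim : {p : ℝ × ℝ | p.1 ≤ x ∧ (-ρ) * p.1 + σ * p.2 ≤ -y}
      = (lm 1 0 0 (-1)) ⁻¹' {p : ℝ × ℝ | p.1 ≤ x ∧ y ≤ ρ * p.1 + σ * p.2} := by
    ext p
    simp only [Set.mem_setOf_eq, Set.mem_preimage, lm_apply, one_mul, zero_mul, neg_mul,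
      mul_neg, add_zero, zero_add, one_mul]
    constructor
    · rintro ⟨u, v⟩
      exact ⟨u, by linarith⟩
    · rintro ⟨u, v⟩
      exact ⟨u, by linarith⟩
  rw [claim, setIntegral_g2_preimage horth1 horth2 horth3]
  set A := {p : ℝ × ℝ | p.1 ≤ x ∧ ρ * p.1 + σ * p.2 ≤ y} with hA
  set D := {p : ℝ × ℝ | p.1 ≤ x ∧ y ≤ ρ * p.1 + σ * p.2} with hD
  set D' := {p : ℝ × ℝ | p.1 ≤ x ∧ y < ρ * p.1 + σ * p.2} with hD'
  have hAm : MeasurableSet A := by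
    rw [hA, Set.setOf_and]
    exact (measurableSet_le (by fun_prop) (by fun_prop)).inter
      (measurableSet_le (by fun_prop) (by fun_prop))
  have hD'm : MeasurableSet D' := by
    rw [hD', Set.setOf_and]
    exact (measurableSet_le (by fun_prop) (by fun_prop)).inter
      (measurableSet_lt (by fun_prop) (by fun_prop))
  have hDD' : ∫ p in D, g2 p = ∫ p in D', g2 p := by
    apply setIntegral_congr_set
    rw [ae_eq_set]
    constructor
    · refine measure_mono_null ?_ (line_null ρ σ y hσ.ne')
      rintro p ⟨hpD, hn'⟩
      simp only [hD, Set.mem_setOf_eq] at hpD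
      obtain ⟨u, v⟩ := hpD
      have hE : ¬ (y < ρ * p.1 + σ * p.2) := fun hlt => hn' ⟨u, hlt⟩
      simp only [Set.mem_setOf_eq]
      have := not_lt.1 hE
      linarith
    · rw [show D' \ D = ∅ from ?_]
      · exact measure_empty
      · rw [Set.diff_eq_empty]
        rintro p ⟨u, v⟩; exact ⟨u, v.le⟩
  have hunion : {p : ℝ × ℝ | p.1 ≤ x} = A ∪ D' := by
    ext p
    simp only [Set.mem_setOf_eq, Set.mem_union, hA, hD']
    constructor
    · intro u
      rcases le_or_gt (ρ * p.1 + σ * p.2) y with hle | hlt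
      · exact Or.inl ⟨u, hle⟩
      · exact Or.inr ⟨u, hlt⟩
    · rintro (⟨u, _⟩ | ⟨u, _⟩) <;> exact u
  have hdisj : Disjoint A D' := by
    rw [Set.disjoint_left]
    rintro p ⟨_, u⟩ ⟨_, v⟩
    exact absurd u (not_le.2 v)
  rw [hDD', hunion,
    setIntegral_union hdisj hD'm (g2_integrable.integrableOn) (g2_integrable.integrableOn),
    mul_add]

theorem biCdf_split (x y ρ : ℝ) (hρ : ρ ∈ Set.Ioo (-1:ℝ) 1) (hρ0 : ρ ≠ 0) :
    biCdf ρ x y =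
      ((1 - (if 0 ≤ ρ then (1:ℝ) else -1)) / 2) * stdCdf x +
        (if 0 ≤ ρ then (1:ℝ) else -1) *
          (biCdf (-Real.sqrt ((1 - |ρ|) / 2))
              ((x - y * (if 0 ≤ ρ then (1:ℝ) else -1)) / Real.sqrt (2 * (1 - |ρ|)))
              (y * (if 0 ≤ ρ then (1:ℝ) else -1)) +
            biCdf (-Real.sqrt ((1 - |ρ|) / 2))
              (-((x - y * (if 0 ≤ ρ then (1:ℝ) else -1)) / Real.sqrt (2 * (1 - |ρ|))))
              x) := by
  obtain ⟨hm1, h1⟩ := hρ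
  rcases le_or_gt 0 ρ with hpos | hneg
  · have h0 : 0 < ρ := lt_of_le_of_ne hpos (Ne.symm hρ0)
    rw [if_pos hpos, abs_of_pos h0]
    simp only [mul_one, one_mul]
    rw [show ((1:ℝ)-1)/2 = 0 by norm_num, zero_mul, zero_add]
    exact key h0 h1 x y
  · rw [if_neg (not_le.2 hneg), abs_of_neg hneg]
    have hsq : ρ^2 < 1 := by nlinarith
    have hrefl := reflect hsq x y
    have hkey := key (by linarith : (0:ℝ) < -ρ) (by linarith : -ρ < 1) x (-y)
    rw [show (1:ℝ) - -ρ = 1 + ρ by ring] at hkey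
    rw [show y * (-1:ℝ) = -y by ring, show x - -y = x + y by ring,
      show (1:ℝ) - -ρ = 1 + ρ by ring]
    rw [show x - -y = x + y by ring] at hkey
    linarith [hrefl, hkey]
end
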